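/- arXiv:1303.5388 — 7 statements merged into one kernel-verified Lean document; each statement's English description precedes it below -/
import Mathlib

section
/- Let Q and P be finite subsets of ℝ^d, let w : Q → ℝ and v : P → ℝ be non-negative weight functions, and let φ(x) = (min_{q∈Q} ‖x−q‖² + w_q)^{1/2} and ψ(x) = (min_{p∈P} ‖x−p‖² + v_p)^{1/2} be the associated distance-like functions. Then the Hausdorff distance between the convex hull of Q and the convex hull of P is at most the sup-norm ‖φ − ψ‖_∞ = sup_{x∈ℝ^d} |φ(x) − ψ(x)|. -/
open Metric RealInnerProductSpace

private lemma aux_sqrt_add {a b : ℝ} (ha : 0 ≤ a) (hb : 0 ≤ b) :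
    Real.sqrt (a + b) ≤ Real.sqrt a + Real.sqrt b := by
  rw [Real.sqrt_le_iff]
  constructor
  · positivity
  · nlinarith [Real.sq_sqrt ha, Real.sq_sqrt hb, Real.sqrt_nonneg a, Real.sqrt_nonneg b]

private lemma aux_sublevel_convex {E : Type*} [NormedAddCommGroup E] [NormedSpace ℝ E]
    {K : Set E} (hK : Convex ℝ K) (hKc : IsCompact K) (hne : K.Nonempty) (S : ℝ) :
    Convex ℝ {x : E | Metric.infDist x K ≤ S} := by
  intro x hx y hy a b ha hb hab
  obtain ⟨yx, hyxK, hyx⟩ := hKc.exists_infDist_eq_dist hne x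
  obtain ⟨yy, hyyK, hyy⟩ := hKc.exists_infDist_eq_dist hne y
  have hmem : a • yx + b • yy ∈ K := hK hyxK hyyK ha hb hab
  have h1 : Metric.infDist (a • x + b • y) K ≤ dist (a • x + b • y) (a • yx + b • yy) :=
    Metric.infDist_le_dist_of_mem hmem
  have h2 : dist (a • x + b • y) (a • yx + b • yy) ≤ a * dist x yx + b * dist y yy := by
    have heq : a • x + b • y - (a • yx + b • yy) = a • (x - yx) + b • (y - yy) := by
      module
    rw [dist_eq_norm, heq]
    calc ‖a • (x - yx) + b • (y - yy)‖ ≤ ‖a • (x - yx)‖ + ‖b • (y - yy)‖ := norm_add_le _ _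
      _ = a * ‖x - yx‖ + b * ‖y - yy‖ := by
          rw [norm_smul, norm_smul, Real.norm_of_nonneg ha, Real.norm_of_nonneg hb]
      _ = a * dist x yx + b * dist y yy := by rw [dist_eq_norm, dist_eq_norm]
  have hxS : dist x yx ≤ S := hyx ▸ hx
  have hyS : dist y yy ≤ S := hyy ▸ hy
  have h3 : Metric.infDist (a • x + b • y) K ≤ a * S + b * S := by
    nlinarith [dist_nonneg (x := x) (y := yx), dist_nonneg (x := y) (y := yy)]
  have h4 : a * S + b * S = S := by rw [← add_mul, hab, one_mul]
  simpa [Set.mem_setOf_eq] using h3.trans_eq h4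

private lemma aux_site_le {E : Type*} [NormedAddCommGroup E] [InnerProductSpace ℝ E]
    (P : Finset E) (hP : P.Nonempty) (v : E → ℝ) (hv : ∀ p ∈ P, 0 ≤ v p)
    (q : E) (wq : ℝ) (hwq : 0 ≤ wq) (S : ℝ) (hS0 : 0 ≤ S)
    (H : ∀ x : E, Real.sqrt (P.inf' hP fun p => ‖x - p‖ ^ 2 + v p)
          - Real.sqrt (‖x - q‖ ^ 2 + wq) ≤ S) :
    Metric.infDist q (convexHull ℝ (P : Set E)) ≤ S := by
  set K := convexHull ℝ (P : Set E) with hKdef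
  have hKc : IsCompact K := P.finite_toSet.isCompact_convexHull (𝕜 := ℝ)
  have hKconv : Convex ℝ K := convex_convexHull ℝ _
  obtain ⟨p0, hp0⟩ := id hP
  have hKne : K.Nonempty := ⟨p0, subset_convexHull ℝ _ (by exact_mod_cast hp0)⟩
  obtain ⟨y, hyK, hy⟩ := exists_norm_eq_iInf_of_complete_convex hKne hKc.isComplete hKconv q
  have obtuse : ∀ p ∈ K, ⟪q - y, p - y⟫ ≤ 0 :=
    (norm_eq_iInf_iff_real_inner_le_zero hKconv hyK).mp hy
  have hinf : Metric.infDist q K = ‖q - y‖ := by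
    rw [Metric.infDist_eq_iInf, hy]
    simp [dist_eq_norm]
  rw [hinf]
  set r : ℝ := ‖q - y‖ with hr
  have hr0 : 0 ≤ r := norm_nonneg _
  have key : ∀ ε : ℝ, 0 < ε → r ≤ S + ε := by
    intro ε hε
    rcases hr0.eq_or_lt with hrz | hrpos
    · linarith [hrz.symm]
    set t : ℝ := max 1 (wq / (2 * ε)) with ht
    have ht0 : 0 < t := lt_of_lt_of_le one_pos (le_max_left _ _)
    have htw : wq / (2 * t) ≤ ε := by
      rw [div_le_iff₀ (by positivity)]
      have h2 : wq / (2 * ε) ≤ t := le_max_right _ _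
      rw [div_le_iff₀ (by positivity)] at h2
      linarith
    set u : E := r⁻¹ • (q - y) with hu
    have hnu : ‖u‖ = 1 := by
      rw [hu, norm_smul, norm_inv, Real.norm_of_nonneg hr0, ← hr,
        inv_mul_cancel₀ hrpos.ne']
    have hIPqy : ⟪q - y, u⟫ = r := by
      rw [hu, real_inner_smul_right, real_inner_self_eq_norm_sq, ← hr]
      field_simp
    have hIPuu : ⟪u, u⟫ = 1 := by
      rw [real_inner_self_eq_norm_sq, hnu]; norm_num
    set x : E := q + t • u with hx
    have hxq : x - q = t • u := by rw [hx]; abel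
    have hxqnorm : ‖x - q‖ = t := by
      rw [hxq, norm_smul, Real.norm_of_nonneg ht0.le, hnu, mul_one]
    -- lower bound for ψ at x
    have hlow : ∀ p ∈ P, (r + t) ^ 2 ≤ ‖x - p‖ ^ 2 + v p := by
      intro p hp
      have hpK : p ∈ K := subset_convexHull ℝ _ (by exact_mod_cast hp)
      have hinner : r + t ≤ ⟪x - p, u⟫ := by
        have hxp : x - p = (q - y) + (y - p) + t • u := by rw [hx]; abel
        rw [hxp, inner_add_left, inner_add_left, real_inner_smul_left, hIPqy, hIPuu]
        have hyp : 0 ≤ ⟪y - p, u⟫ := by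
          rw [hu, real_inner_smul_right]
          have h1 : ⟪q - y, p - y⟫ ≤ 0 := obtuse p hpK
          have h2 : ⟪y - p, q - y⟫ = -⟪q - y, p - y⟫ := by
            rw [← neg_sub p y, inner_neg_left, real_inner_comm]
          rw [h2]
          exact mul_nonneg (inv_nonneg.mpr hr0) (neg_nonneg.mpr h1)
        linarith
      have hnormp : r + t ≤ ‖x - p‖ := by
        calc r + t ≤ ⟪x - p, u⟫ := hinner
          _ ≤ ‖x - p‖ * ‖u‖ := real_inner_le_norm _ _
          _ = ‖x - p‖ := by rw [hnu, mul_one]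
      have := mul_self_le_mul_self (by positivity) hnormp
      have hvp := hv p hp
      nlinarith
    have hψ : r + t ≤ Real.sqrt (P.inf' hP fun p => ‖x - p‖ ^ 2 + v p) := by
      apply Real.le_sqrt_of_sq_le
      exact Finset.le_inf' hP _ hlow
    -- upper bound for φ-like term at x
    have hφ : Real.sqrt (‖x - q‖ ^ 2 + wq) ≤ t + wq / (2 * t) := by
      rw [hxqnorm]
      rw [Real.sqrt_le_iff]
      constructor
      · positivity
      · have hsq : (t + wq / (2 * t)) ^ 2 = t ^ 2 + wq + (wq / (2 * t)) ^ 2 := by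
          field_simp
          ring
        nlinarith [sq_nonneg (wq / (2 * t))]
    have := H x
    linarith
  by_contra hcon
  push_neg at hcon
  have := key ((r - S) / 2) (by linarith)
  linarith

private lemma aux_one_side {E : Type*} [NormedAddCommGroup E] [InnerProductSpace ℝ E]
    (Q P : Finset E) (hQ : Q.Nonempty) (hP : P.Nonempty)
    (w v : E → ℝ) (hw : ∀ q ∈ Q, 0 ≤ w q) (hv : ∀ p ∈ P, 0 ≤ v p)
    (q0 : E) (hq0 : q0 ∈ Q) (x : E) :
    Real.sqrt (Q.inf' hQ fun q => ‖x - q‖ ^ 2 + w q)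
      - Real.sqrt (P.inf' hP fun p => ‖x - p‖ ^ 2 + v p)
      ≤ (P.sup' hP fun p => ‖q0 - p‖) + Real.sqrt (w q0) := by
  obtain ⟨p1, hp1, hval⟩ := Finset.exists_mem_eq_inf' hP (fun p => ‖x - p‖ ^ 2 + v p)
  have h1 : Real.sqrt (Q.inf' hQ fun q => ‖x - q‖ ^ 2 + w q)
      ≤ ‖x - q0‖ + Real.sqrt (w q0) := by
    calc Real.sqrt (Q.inf' hQ fun q => ‖x - q‖ ^ 2 + w q)
        ≤ Real.sqrt (‖x - q0‖ ^ 2 + w q0) :=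
          Real.sqrt_le_sqrt (Finset.inf'_le _ hq0)
      _ ≤ Real.sqrt (‖x - q0‖ ^ 2) + Real.sqrt (w q0) :=
          aux_sqrt_add (by positivity) (hw q0 hq0)
      _ = ‖x - q0‖ + Real.sqrt (w q0) := by rw [Real.sqrt_sq (norm_nonneg _)]
  have h2 : ‖x - p1‖ ≤ Real.sqrt (P.inf' hP fun p => ‖x - p‖ ^ 2 + v p) := by
    rw [hval]
    apply Real.le_sqrt_of_sq_le
    have := hv p1 hp1
    nlinarith
  have h3 : ‖x - q0‖ ≤ ‖x - p1‖ + ‖q0 - p1‖ := by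
    have := norm_sub_le_norm_sub_add_norm_sub x q0 p1
    calc ‖x - q0‖ = ‖x - p1 + (p1 - q0)‖ := by rw [sub_add_sub_cancel]
      _ ≤ ‖x - p1‖ + ‖p1 - q0‖ := norm_add_le _ _
      _ = ‖x - p1‖ + ‖q0 - p1‖ := by rw [norm_sub_rev p1 q0]
  have h4 : ‖q0 - p1‖ ≤ P.sup' hP fun p => ‖q0 - p‖ := Finset.le_sup' (fun p => ‖q0 - p‖) hp1
  linarith

/-- For two distance-like functions `φ = φ_Q^w` and `ψ = φ_P^v` with
nonempty finite site sets `Q, P ⊆ ℝ^d` and non-negative weights, the Hausdorff distance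
between the convex hulls of the site sets (the traces at infinity) is bounded by the
sup-norm `‖φ - ψ‖_∞`. -/
theorem hausdorffDist_convexHull_le_sup_norm_sub
    {d : ℕ} (Q P : Finset (EuclideanSpace ℝ (Fin d)))
    (hQ : Q.Nonempty) (hP : P.Nonempty)
    (w v : EuclideanSpace ℝ (Fin d) → ℝ)
    (hw : ∀ q ∈ Q, 0 ≤ w q) (hv : ∀ p ∈ P, 0 ≤ v p)
    (φ ψ : EuclideanSpace ℝ (Fin d) → ℝ)
    (hφ : ∀ x, φ x = Real.sqrt (Q.inf' hQ fun q => ‖x - q‖ ^ 2 + w q))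
    (hψ : ∀ x, ψ x = Real.sqrt (P.inf' hP fun p => ‖x - p‖ ^ 2 + v p)) :
    Metric.hausdorffDist (convexHull ℝ (Q : Set (EuclideanSpace ℝ (Fin d))))
        (convexHull ℝ (P : Set (EuclideanSpace ℝ (Fin d)))) ≤
      ⨆ x : EuclideanSpace ℝ (Fin d), |φ x - ψ x| := by
  obtain ⟨q0, hq0⟩ := id hQ
  obtain ⟨p0, hp0⟩ := id hP
  set S : ℝ := ⨆ x : EuclideanSpace ℝ (Fin d), |φ x - ψ x| with hS
  have hS0 : 0 ≤ S := Real.iSup_nonneg fun x => abs_nonneg _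
  -- boundedness of the range
  have hbdd : BddAbove (Set.range fun x : EuclideanSpace ℝ (Fin d) => |φ x - ψ x|) := by
    refine ⟨max ((P.sup' hP fun p => ‖q0 - p‖) + Real.sqrt (w q0))
      ((Q.sup' hQ fun q => ‖p0 - q‖) + Real.sqrt (v p0)), ?_⟩
    rintro _ ⟨x, rfl⟩
    rw [abs_sub_le_iff]
    constructor
    · refine le_trans ?_ (le_max_left _ _)
      rw [hφ x, hψ x]
      exact aux_one_side Q P hQ hP w v hw hv q0 hq0 x
    · refine le_trans ?_ (le_max_right _ _)
      rw [hφ x, hψ x]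
      exact aux_one_side P Q hP hQ v w hv hw p0 hp0 x
  have hle : ∀ x : EuclideanSpace ℝ (Fin d), |φ x - ψ x| ≤ S := fun x => le_ciSup hbdd x
  -- compactness facts
  have hPc : IsCompact (convexHull ℝ (P : Set (EuclideanSpace ℝ (Fin d)))) := P.finite_toSet.isCompact_convexHull (𝕜 := ℝ)
  have hQc : IsCompact (convexHull ℝ (Q : Set (EuclideanSpace ℝ (Fin d)))) := Q.finite_toSet.isCompact_convexHull (𝕜 := ℝ)
  have hPne : (convexHull ℝ (P : Set (EuclideanSpace ℝ (Fin d)))).Nonempty :=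
    ⟨p0, subset_convexHull ℝ _ (by exact_mod_cast hp0)⟩
  have hQne : (convexHull ℝ (Q : Set (EuclideanSpace ℝ (Fin d)))).Nonempty :=
    ⟨q0, subset_convexHull ℝ _ (by exact_mod_cast hq0)⟩
  -- first direction
  have H1 : ∀ x ∈ convexHull ℝ (Q : Set (EuclideanSpace ℝ (Fin d))), Metric.infDist x (convexHull ℝ (P : Set (EuclideanSpace ℝ (Fin d)))) ≤ S := by
    have hsub : (Q : Set (EuclideanSpace ℝ (Fin d))) ⊆ {x : EuclideanSpace ℝ (Fin d) | Metric.infDist x (convexHull ℝ (P : Set (EuclideanSpace ℝ (Fin d)))) ≤ S} := by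
      intro q hq
      have hq' : q ∈ Q := by exact_mod_cast hq
      refine aux_site_le P hP v hv q (w q) (hw q hq') S hS0 ?_
      intro x
      have h1 : φ x ≤ Real.sqrt (‖x - q‖ ^ 2 + w q) := by
        rw [hφ x]; exact Real.sqrt_le_sqrt (Finset.inf'_le _ hq')
      have h2 : ψ x - φ x ≤ S := by
        calc ψ x - φ x ≤ |φ x - ψ x| := by rw [abs_sub_comm]; exact le_abs_self _
          _ ≤ S := hle x
      rw [← hψ x]
      linarith
    have := convexHull_min hsub
      (aux_sublevel_convex (convex_convexHull ℝ _) hPc hPne S)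
    exact fun x hx => this hx
  -- second direction
  have H2 : ∀ x ∈ convexHull ℝ (P : Set (EuclideanSpace ℝ (Fin d))), Metric.infDist x (convexHull ℝ (Q : Set (EuclideanSpace ℝ (Fin d)))) ≤ S := by
    have hsub : (P : Set (EuclideanSpace ℝ (Fin d))) ⊆ {x : EuclideanSpace ℝ (Fin d) | Metric.infDist x (convexHull ℝ (Q : Set (EuclideanSpace ℝ (Fin d)))) ≤ S} := by
      intro p hp
      have hp' : p ∈ P := by exact_mod_cast hp
      refine aux_site_le Q hQ w hw p (v p) (hv p hp') S hS0 ?_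
      intro x
      have h1 : ψ x ≤ Real.sqrt (‖x - p‖ ^ 2 + v p) := by
        rw [hψ x]; exact Real.sqrt_le_sqrt (Finset.inf'_le _ hp')
      have h2 : φ x - ψ x ≤ S := le_trans (le_abs_self _) (hle x)
      rw [← hφ x]
      linarith
    have := convexHull_min hsub
      (aux_sublevel_convex (convex_convexHull ℝ _) hQc hQne S)
    exact fun x hx => this hx
  exact Metric.hausdorffDist_le_of_infDist hS0 H1 H2
end

section
/- Let Q be a finite subset of ℝ^d with non-negative weights (w_q)_{q∈Q}, let φ(x) = (min_{q∈Q} ‖x−q‖² + w_q)^{1/2}, and let u be a unit vector in ℝ^d. Then along the ray γ_t = t·u one has φ(γ_t) = t − h(conv(Q), u) + O(1/t) as t → +∞, where h(conv(Q), u) = max_{q∈Q} u·q is the support function of the convex hull of Q in direction u. Concretely: φ(t·u) − t + max_{q∈Q} u·q is bounded by C/t for some constant C and all sufficiently large t. -/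
open Metric RealInnerProductSpace

/-- For a distance-like function `φ = φ_Q^w` with nonempty finite site set
`Q ⊆ ℝ^d` and non-negative weights, along the unit-speed ray `γ_t = t • u` one has
`φ(γ_t) = t - h(conv Q, u) + O(1/t)`, where `h(conv Q, u) = max_{q ∈ Q} ⟪u, q⟫` is the
support function of the convex hull of `Q` in direction `u`. -/
theorem dist_like_asymptotic_along_ray
    {d : ℕ} (Q : Finset (EuclideanSpace ℝ (Fin d))) (hQ : Q.Nonempty)
    (w : EuclideanSpace ℝ (Fin d) → ℝ) (hw : ∀ q ∈ Q, 0 ≤ w q)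
    (φ : EuclideanSpace ℝ (Fin d) → ℝ)
    (hφ : ∀ x, φ x = Real.sqrt (Q.inf' hQ fun q => ‖x - q‖ ^ 2 + w q))
    (u : EuclideanSpace ℝ (Fin d)) (hu : ‖u‖ = 1) :
    ∃ C T : ℝ, ∀ t : ℝ, T ≤ t →
      |φ (t • u) - t + Q.sup' hQ (fun q => ⟪u, q⟫)| ≤ C / t := by
  classical
  set M := Q.sup' hQ (fun q => ⟪u, q⟫) with hM
  obtain ⟨p, hp, hpM⟩ := Q.exists_mem_eq_sup' hQ (fun q => ⟪u, q⟫)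
  have hMp : M = ⟪u, p⟫ := hpM
  have hMle : M ^ 2 ≤ ‖p‖ ^ 2 := by
    have h1 := abs_real_inner_le_norm u p
    rw [hu, one_mul] at h1
    have h2 : |M| ≤ ‖p‖ := by rw [hMp]; exact h1
    nlinarith [sq_abs M, abs_nonneg M, norm_nonneg p]
  have hwp := hw p hp
  have hB0 : (0:ℝ) ≤ ‖p‖ ^ 2 + w p + M ^ 2 := by positivity
  set B := ‖p‖ ^ 2 + w p + M ^ 2 with hB
  refine ⟨2 * B, 2 * |M| + 1, fun t ht => ?_⟩
  have habs : M ≤ |M| := le_abs_self M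
  have habs0 : 0 ≤ |M| := abs_nonneg M
  have ht0 : 0 < t := by linarith
  have hs : t / 2 ≤ t - M := by linarith
  have hexp : ∀ q : EuclideanSpace ℝ (Fin d),
      ‖t • u - q‖ ^ 2 = t ^ 2 - 2 * t * ⟪u, q⟫ + ‖q‖ ^ 2 := by
    intro q
    rw [@norm_sub_sq_real, real_inner_smul_left, norm_smul, hu, Real.norm_eq_abs,
      mul_one, sq_abs]
    ring
  set m := Q.inf' hQ (fun q => ‖t • u - q‖ ^ 2 + w q) with hm
  have hmlo : t ^ 2 - 2 * t * M ≤ m := by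
    apply Finset.le_inf'
    intro q hq
    have h1 : ⟪u, q⟫ ≤ M := Finset.le_sup' _ hq
    have h2 := hw q hq
    have h3 := sq_nonneg ‖q‖
    rw [hexp q]
    nlinarith [ht0.le]
  have hmhi : m ≤ t ^ 2 - 2 * t * M + ‖p‖ ^ 2 + w p := by
    have h1 : m ≤ ‖t • u - p‖ ^ 2 + w p := Finset.inf'_le _ hp
    rw [hexp p, ← hMp] at h1
    linarith
  have hm0 : 0 ≤ m := by nlinarith
  have hφt : φ (t • u) = Real.sqrt m := by rw [hφ]
  have hsq : Real.sqrt m ^ 2 = m := Real.sq_sqrt hm0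
  have hs0 : 0 ≤ Real.sqrt m := Real.sqrt_nonneg m
  rw [hφt, abs_le]
  constructor
  · have key : (t - M - Real.sqrt m) * t ≤ 2 * B := by
      nlinarith [sq_nonneg (Real.sqrt m - (t - M)), mul_nonneg hs0 hs0]
    have h2 : t - M - Real.sqrt m ≤ 2 * B / t := by
      rw [le_div_iff₀ ht0]; exact key
    linarith
  · have key : (Real.sqrt m - (t - M)) * t ≤ 2 * B := by
      nlinarith [sq_nonneg (Real.sqrt m - (t - M)), mul_nonneg hs0 hs0]
    rw [le_div_iff₀ ht0]
    nlinarith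
end

section
/- Let Q be a finite subset of ℝ^d with non-negative weights (w_q)_{q∈Q}. If the power cell Pow_Q^w(q) = {x ∈ ℝ^d ; ∀p∈Q, ‖x−q‖² + w_q ≤ ‖x−p‖² + w_p} of a point q ∈ Q is unbounded, then q lies on the boundary of the convex hull of Q. -/
open Metric

/-- For a finite weighted point set `(Q, w)` in `ℝ^d` with non-negative
weights, if the power cell of a point `q ∈ Q` is unbounded, then `q` lies on the boundary
of the convex hull of `Q`. -/
theorem mem_frontier_convexHull_of_powerCell_unbounded
    {d : ℕ} (Q : Finset (EuclideanSpace ℝ (Fin d)))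
    (w : EuclideanSpace ℝ (Fin d) → ℝ) (hw : ∀ p ∈ Q, 0 ≤ w p)
    (q : EuclideanSpace ℝ (Fin d)) (hq : q ∈ Q)
    (hunb : ¬ Bornology.IsBounded
      {x : EuclideanSpace ℝ (Fin d) | ∀ p ∈ Q, ‖x - q‖ ^ 2 + w q ≤ ‖x - p‖ ^ 2 + w p}) :
    q ∈ frontier (convexHull ℝ (Q : Set (EuclideanSpace ℝ (Fin d)))) := by
  classical
  set S := {x : EuclideanSpace ℝ (Fin d) | ∀ p ∈ Q, ‖x - q‖ ^ 2 + w q ≤ ‖x - p‖ ^ 2 + w p}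
    with hS
  -- pick a sequence in S going to infinity
  have hx : ∀ n : ℕ, ∃ x, x ∈ S ∧ (n : ℝ) < ‖x - q‖ := by
    intro n
    by_contra h
    push_neg at h
    refine hunb ((Metric.isBounded_iff_subset_closedBall q).2 ⟨n, fun x hxS => ?_⟩)
    simpa [Metric.mem_closedBall, dist_eq_norm] using h x hxS
  choose x hxS hxn using hx
  have hr : ∀ n : ℕ, (0 : ℝ) < ‖x n - q‖ := fun n =>
    lt_of_le_of_lt (Nat.cast_nonneg n) (hxn n)
  set u : ℕ → EuclideanSpace ℝ (Fin d) := fun n => ‖x n - q‖⁻¹ • (x n - q) with hu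
  have hus : ∀ n, u n ∈ sphere (0 : EuclideanSpace ℝ (Fin d)) 1 := by
    intro n
    simp only [mem_sphere_iff_norm, sub_zero, hu, norm_smul, norm_inv, norm_norm]
    exact inv_mul_cancel₀ (ne_of_gt (hr n))
  obtain ⟨v, hv, φ, hφ, hvt⟩ :=
    (isCompact_sphere (0 : EuclideanSpace ℝ (Fin d)) 1).tendsto_subseq hus
  have hvnorm : ‖v‖ = 1 := by simpa using hv
  -- key separation: ⟪v, p - q⟫ ≤ 0 for all p ∈ Q
  have hsep : ∀ p ∈ Q, inner ℝ v (p - q) ≤ (0 : ℝ) := by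
    intro p hp
    have hineq : ∀ n : ℕ, (inner ℝ (u n) (p - q) : ℝ) ≤
        (‖p - q‖ ^ 2 + w p - w q) / (2 * ‖x n - q‖) := by
      intro n
      have h1 := hxS n p hp
      have hexp : ‖x n - p‖ ^ 2
          = ‖x n - q‖ ^ 2 - 2 * (inner ℝ (x n - q) (p - q) : ℝ) + ‖p - q‖ ^ 2 := by
        have := @norm_sub_sq_real (EuclideanSpace ℝ (Fin d)) _ _ (x n - q) (p - q)
        have heq : x n - q - (p - q) = x n - p := by abel
        rw [heq] at this
        linarith [this]
      have h2 : 2 * (inner ℝ (x n - q) (p - q) : ℝ) ≤ ‖p - q‖ ^ 2 + w p - w q := by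
        rw [hexp] at h1; linarith
      have h3 : (inner ℝ (u n) (p - q) : ℝ) = ‖x n - q‖⁻¹ * inner ℝ (x n - q) (p - q) := by
        simp [hu, inner_smul_left]
      rw [h3, le_div_iff₀ (mul_pos two_pos (hr n))]
      calc ‖x n - q‖⁻¹ * (inner ℝ (x n - q) (p - q) : ℝ) * (2 * ‖x n - q‖)
          = 2 * (inner ℝ (x n - q) (p - q) : ℝ) * (‖x n - q‖⁻¹ * ‖x n - q‖) := by ring
        _ = 2 * (inner ℝ (x n - q) (p - q) : ℝ) := by
            rw [inv_mul_cancel₀ (ne_of_gt (hr n)), mul_one]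
        _ ≤ ‖p - q‖ ^ 2 + w p - w q := h2
      -- done
    have htend1 : Filter.Tendsto (fun n => (inner ℝ (u (φ n)) (p - q) : ℝ)) Filter.atTop
        (nhds (inner ℝ v (p - q))) := by
      exact (Filter.Tendsto.inner hvt tendsto_const_nhds)
    have hrt : Filter.Tendsto (fun n => ‖x (φ n) - q‖) Filter.atTop Filter.atTop := by
      apply Filter.tendsto_atTop_mono (fun n => (hxn (φ n)).le)
      exact tendsto_natCast_atTop_atTop.comp hφ.tendsto_atTop
    have htend2 : Filter.Tendsto
        (fun n => (‖p - q‖ ^ 2 + w p - w q) / (2 * ‖x (φ n) - q‖)) Filter.atTop (nhds 0) :=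
      Filter.Tendsto.div_atTop tendsto_const_nhds
        (Filter.Tendsto.const_mul_atTop two_pos hrt)
    exact le_of_tendsto_of_tendsto' htend1 htend2 (fun n => hineq (φ n))
  -- the convex hull lies in the half-space {x | ⟪v, x⟫ ≤ ⟪v, q⟫}
  have hhull : convexHull ℝ (Q : Set (EuclideanSpace ℝ (Fin d))) ⊆
      {y | (inner ℝ v y : ℝ) ≤ inner ℝ v q} := by
    apply convexHull_min
    · intro p hp
      have := hsep p hp
      rw [inner_sub_right] at this
      simpa using this
    · have hlin : IsLinearMap ℝ (fun y : EuclideanSpace ℝ (Fin d) => (inner ℝ v y : ℝ)) :=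
        ⟨fun a b => inner_add_right v a b, fun c a => inner_smul_right v a c⟩
      exact convex_halfSpace_le hlin _
  constructor
  · exact subset_closure (subset_convexHull ℝ _ hq)
  · intro hint
    rw [mem_interior_iff_mem_nhds, Metric.mem_nhds_iff] at hint
    obtain ⟨ε, hε, hball⟩ := hint
    have hy : q + (ε / 2) • v ∈ convexHull ℝ (Q : Set (EuclideanSpace ℝ (Fin d))) := by
      apply hball
      simp only [Metric.mem_ball, dist_eq_norm, add_sub_cancel_left, norm_smul,
        Real.norm_eq_abs, hvnorm, mul_one]
      rw [abs_of_pos (by linarith)]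
      linarith
    have := hhull hy
    simp only [Set.mem_setOf_eq, inner_add_right, inner_smul_right,
      real_inner_self_eq_norm_sq, hvnorm] at this
    norm_num at this
    linarith
end

section
/- Let Q be a finite subset of ℝ^d with non-negative weights (w_q)_{q∈Q}. If q is an extreme point of the convex hull of Q, then the power cell Pow_Q^w(q) = {x ∈ ℝ^d ; ∀p∈Q, ‖x−q‖² + w_q ≤ ‖x−p‖² + w_p} is unbounded; more precisely, there exists a unit vector u such that for every r ∈ ℝ^d the ray r + t·u belongs to Pow_Q^w(q) for all sufficiently large t. -/
open Metric Filter

/-- An extreme point of the convex hull of a finite set `Q` admits a vector `u` of norm 1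
with `⟪u, p - q⟫ < 0` for all `p ∈ Q` with `p ≠ q` (when `d ≥ 1`). -/
lemma exists_unit_sep_of_extremePoint {d : ℕ} (hd : 0 < d)
    (Q : Finset (EuclideanSpace ℝ (Fin d)))
    (q : EuclideanSpace ℝ (Fin d))
    (hq : q ∈ Set.extremePoints ℝ (convexHull ℝ (Q : Set (EuclideanSpace ℝ (Fin d))))) :
    ∃ u : EuclideanSpace ℝ (Fin d), ‖u‖ = 1 ∧
      ∀ p ∈ Q, p ≠ q → inner ℝ u (p - q) < (0 : ℝ) := by
  classical
  by_cases hQ : ∃ p ∈ Q, p ≠ q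
  · -- q is not in the convex hull of Q \ {q}
    rw [(convex_convexHull ℝ _).mem_extremePoints_iff_mem_diff_convexHull_diff] at hq
    obtain ⟨hq1, hq2⟩ := hq
    have hnot : q ∉ convexHull ℝ ((Q : Set (EuclideanSpace ℝ (Fin d))) \ {q}) := by
      intro h
      exact hq2 (convexHull_mono (Set.diff_subset_diff_left (subset_convexHull ℝ _)) h)
    have hclosed : IsClosed (convexHull ℝ ((Q : Set (EuclideanSpace ℝ (Fin d))) \ {q})) :=
      Set.Finite.isClosed_convexHull (𝕜 := ℝ) Q.finite_toSet.diff
    obtain ⟨f, c, hfs, hfq⟩ := geometric_hahn_banach_closed_point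
      (convex_convexHull ℝ _) hclosed hnot
    set v : EuclideanSpace ℝ (Fin d) := (InnerProductSpace.toDual ℝ _).symm f with hv
    have hvapp : ∀ x, inner ℝ v x = f x := fun x => InnerProductSpace.toDual_symm_apply
    obtain ⟨p₀, hp₀Q, hp₀q⟩ := hQ
    have hp₀ : f p₀ < c := hfs p₀ (subset_convexHull ℝ _ ⟨hp₀Q, hp₀q⟩)
    have hvne : v ≠ 0 := by
      intro h
      rw [hv] at h
      have : f = 0 := by
        have := (InnerProductSpace.toDual ℝ (EuclideanSpace ℝ (Fin d))).symm.injective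
          (a₁ := f) (a₂ := 0)
        simpa [h, map_zero] using fun hh => this hh
      simp [this] at hp₀ hfq; linarith
    refine ⟨‖v‖⁻¹ • v, ?_, ?_⟩
    · simp [norm_smul, norm_ne_zero_iff.2 hvne, inv_mul_cancel₀]
    · intro p hp hpq
      have hfp : f p < c := hfs p (subset_convexHull ℝ _ ⟨hp, hpq⟩)
      have h1 : inner ℝ v (p - q) < (0 : ℝ) := by
        rw [inner_sub_right, hvapp, hvapp]; linarith
      rw [real_inner_smul_left]
      have : (0:ℝ) < ‖v‖⁻¹ := inv_pos.2 (norm_pos_iff.2 hvne)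
      exact mul_neg_of_pos_of_neg this h1
  · push_neg at hQ
    refine ⟨EuclideanSpace.single ⟨0, hd⟩ 1, by simp, ?_⟩
    intro p hp hpq
    exact absurd (hQ p hp) hpq

/-- For a finite weighted point set `(Q, w)` in `ℝ^d` (`d ≥ 1`) with
non-negative weights, if `q` is an extreme point of the convex hull of `Q`, then the power
cell of `q` is unbounded; more precisely there is a unit vector `u` such that for every
`r ∈ ℝ^d` the ray `r + t • u` lies in the power cell of `q` for all sufficiently large `t`. -/
theorem powerCell_unbounded_of_extremePoint
    {d : ℕ} (hd : 0 < d) (Q : Finset (EuclideanSpace ℝ (Fin d)))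
    (w : EuclideanSpace ℝ (Fin d) → ℝ) (hw : ∀ p ∈ Q, 0 ≤ w p)
    (q : EuclideanSpace ℝ (Fin d))
    (hq : q ∈ Set.extremePoints ℝ (convexHull ℝ (Q : Set (EuclideanSpace ℝ (Fin d))))) :
    ∃ u : EuclideanSpace ℝ (Fin d), ‖u‖ = 1 ∧
      ∀ r : EuclideanSpace ℝ (Fin d), ∃ T : ℝ, ∀ t : ℝ, T ≤ t →
        (r + t • u) ∈
          {x : EuclideanSpace ℝ (Fin d) | ∀ p ∈ Q, ‖x - q‖ ^ 2 + w q ≤ ‖x - p‖ ^ 2 + w p} := by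
  classical
  obtain ⟨u, hu, husep⟩ := exists_unit_sep_of_extremePoint hd Q q hq
  refine ⟨u, hu, fun r => ?_⟩
  have H : ∀ p ∈ Q, ∀ᶠ t in (atTop : Filter ℝ),
      ‖r + t • u - q‖ ^ 2 + w q ≤ ‖r + t • u - p‖ ^ 2 + w p := by
    intro p hp
    by_cases hpq : p = q
    · subst hpq; filter_upwards with t using le_refl _
    · have hb : inner ℝ u (p - q) < (0:ℝ) := husep p hp hpq
      have htend : Tendsto (fun t : ℝ => 2 * inner ℝ r (p - q) + t * (2 * inner ℝ u (p - q)))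
          atTop atBot := by
        apply tendsto_atBot_add_const_left
        exact tendsto_id.atTop_mul_const_of_neg (by linarith)
      filter_upwards [htend.eventually
        (eventually_le_atBot (‖p‖ ^ 2 - ‖q‖ ^ 2 + w p - w q))] with t ht
      have hexp : ∀ y : EuclideanSpace ℝ (Fin d),
          ‖r + t • u - y‖ ^ 2 = ‖r + t • u‖ ^ 2 - 2 * inner ℝ (r + t • u) y + ‖y‖ ^ 2 :=
        fun y => norm_sub_sq_real _ _
      rw [hexp, hexp]
      have h1 : (inner ℝ (r + t • u) p : ℝ) - inner ℝ (r + t • u) q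
          = inner ℝ r (p - q) + t * inner ℝ u (p - q) := by
        simp only [inner_add_left, inner_sub_right, real_inner_smul_left]; ring
      nlinarith [h1, ht]
  rw [← eventually_all_finset] at H
  obtain ⟨T, hT⟩ := eventually_atTop.1 H
  exact ⟨T, fun t ht => hT t ht⟩
end

section
/- Let P be a finite set of points in ℝ^d, k an integer with 1 ≤ k ≤ |P|, and define the k-distance d_{P,k}(x) = ((1/k) min_{p_1,…,p_k ∈ P distinct} Σ_{i=1}^k ‖x − p_i‖²)^{1/2}. Then d_{P,k}(x)² = min_{B} (‖x − b̄_B‖² + w_B), where the minimum runs over all subsets B ⊆ P of cardinality k, b̄_B = (1/k) Σ_{p∈B} p is the centroid of B, and w_B = (1/k) Σ_{p∈B} ‖b̄_B − p‖². In particular d_{P,k} is a distance-like function with sites the centroids of k distinct points of P and non-negative weights w_B. -/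
open Metric

private lemma kdist_aux {d k : ℕ} (hk : 0 < k) (B : Finset (EuclideanSpace ℝ (Fin d)))
    (hB : B.card = k) (x : EuclideanSpace ℝ (Fin d)) :
    (k : ℝ)⁻¹ * ∑ p ∈ B, ‖x - p‖ ^ 2 =
      ‖x - (k : ℝ)⁻¹ • ∑ p ∈ B, p‖ ^ 2 +
        (k : ℝ)⁻¹ * ∑ p ∈ B, ‖((k : ℝ)⁻¹ • ∑ q ∈ B, q) - p‖ ^ 2 := by
  have hkR : (k : ℝ) ≠ 0 := by positivity
  set b : EuclideanSpace ℝ (Fin d) := (k : ℝ)⁻¹ • ∑ p ∈ B, p with hb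
  have hsum : ∑ p ∈ B, (b - p) = 0 := by
    rw [Finset.sum_sub_distrib, Finset.sum_const, hB, hb]
    rw [← Nat.cast_smul_eq_nsmul ℝ, smul_smul, mul_inv_cancel₀ hkR, one_smul, sub_self]
  have key : ∀ p : EuclideanSpace ℝ (Fin d),
      ‖x - p‖ ^ 2 = ‖x - b‖ ^ 2 + 2 * inner ℝ (x - b) (b - p) + ‖b - p‖ ^ 2 := by
    intro p
    have h : x - p = (x - b) + (b - p) := by abel
    rw [h, norm_add_sq_real]
  rw [Finset.sum_congr rfl fun p _ => key p, Finset.sum_add_distrib, Finset.sum_add_distrib,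
    Finset.sum_const, hB, ← Finset.mul_sum, ← inner_sum, hsum, inner_zero_right,
    nsmul_eq_mul]
  field_simp
  ring

/-- For a finite point set `P ⊆ ℝ^d` and `1 ≤ k ≤ |P|`, the squared
`k`-distance `d_{P,k}(x)² = (1/k) min_B Σ_{p ∈ B} ‖x - p‖²` (minimum over `k`-element
subsets `B` of `P`) equals `min_B (‖x - b̄_B‖² + w_B)` where `b̄_B` is the centroid of `B`
and `w_B = (1/k) Σ_{p ∈ B} ‖b̄_B - p‖²`; moreover all the weights `w_B` are non-negative,
so `d_{P,k}` is a distance-like function with sites the centroids. -/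
theorem kdistance_sq_eq_min_over_centroids
    {d : ℕ} (P : Finset (EuclideanSpace ℝ (Fin d))) (k : ℕ)
    (hk1 : 1 ≤ k) (hk2 : k ≤ P.card)
    (hne : (P.powersetCard k).Nonempty)
    (dPk : EuclideanSpace ℝ (Fin d) → ℝ)
    (hdPk : ∀ x, dPk x =
      Real.sqrt ((k : ℝ)⁻¹ * (P.powersetCard k).inf' hne fun B => ∑ p ∈ B, ‖x - p‖ ^ 2)) :
    (∀ x, dPk x ^ 2 =
        (P.powersetCard k).inf' hne fun B =>
          ‖x - (k : ℝ)⁻¹ • ∑ p ∈ B, p‖ ^ 2 +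
            (k : ℝ)⁻¹ * ∑ p ∈ B, ‖((k : ℝ)⁻¹ • ∑ q ∈ B, q) - p‖ ^ 2) ∧
      ∀ B ∈ P.powersetCard k,
        0 ≤ (k : ℝ)⁻¹ * ∑ p ∈ B, ‖((k : ℝ)⁻¹ • ∑ q ∈ B, q) - p‖ ^ 2 := by
  have hk : 0 < k := hk1
  constructor
  · intro x
    have hinf_nonneg : 0 ≤ (P.powersetCard k).inf' hne fun B => ∑ p ∈ B, ‖x - p‖ ^ 2 := by
      apply Finset.le_inf'
      intro B _
      positivity
    have h0 : 0 ≤ (k : ℝ)⁻¹ * (P.powersetCard k).inf' hne fun B => ∑ p ∈ B, ‖x - p‖ ^ 2 := by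
      positivity
    rw [hdPk, Real.sq_sqrt h0]
    have hmul : ((k : ℝ)⁻¹ * (P.powersetCard k).inf' hne fun B => ∑ p ∈ B, ‖x - p‖ ^ 2)
        = (P.powersetCard k).inf' hne fun B => (k : ℝ)⁻¹ * ∑ p ∈ B, ‖x - p‖ ^ 2 := by
      apply le_antisymm
      · apply Finset.le_inf'
        intro B hB
        exact mul_le_mul_of_nonneg_left (Finset.inf'_le _ hB) (by positivity)
      · obtain ⟨B, hB, hBeq⟩ := Finset.exists_mem_eq_inf' hne
          fun B => ∑ p ∈ B, ‖x - p‖ ^ 2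
        rw [hBeq]
        exact Finset.inf'_le _ hB
    rw [hmul]
    apply Finset.inf'_congr _ rfl
    intro B hB
    exact kdist_aux hk B (Finset.mem_powersetCard.mp hB).2 x
  · intro B _
    positivity
end

section
/- Let P be a set of N points on the unit sphere of ℝ^d, let S = P ∪ (−P) be its symmetrization, and let L_N^d(P) be the convex hull of the set of centroids of N distinct points of S. Then for every unit vector u, the support function satisfies h(L_N^d(P), u) = (1/N) Σ_{p∈P} |p·u|. -/
open Metric RealInnerProductSpace

attribute [local instance] Classical.propDecidable

/-- The support function of a set `K ⊆ ℝ^d` in direction `u`. -/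
noncomputable def suppFn {d : ℕ} (K : Set (EuclideanSpace ℝ (Fin d)))
    (u : EuclideanSpace ℝ (Fin d)) : ℝ :=
  sSup ((fun x => ⟪u, x⟫) '' K)

/-- The `k`-set polyhedron of a finite set `S ⊆ ℝ^d`: the convex hull of the set of
centroids of `k` distinct points of `S`. -/
noncomputable def kSetPoly {d : ℕ} (S : Finset (EuclideanSpace ℝ (Fin d))) (k : ℕ) :
    Set (EuclideanSpace ℝ (Fin d)) :=
  convexHull ℝ ((S.powersetCard k).image fun T => (k : ℝ)⁻¹ • ∑ t ∈ T, t :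
    Finset (EuclideanSpace ℝ (Fin d)))

/-- Let `P` be a set of `N` points on the unit sphere of `ℝ^d` with
`P ∩ (-P) = ∅`, let `S = P ∪ (-P)` be its symmetrization and let `L_N^d(P)` be the halving
polyhedron of `S` (the convex hull of the centroids of `N` distinct points of `S`). Then
for every unit vector `u`, `h(L_N^d(P), u) = (1/N) Σ_{p ∈ P} |⟪p, u⟫|`. -/
theorem suppFn_halvingPolyhedron
    {d : ℕ} (N : ℕ) (hN : 1 ≤ N) (P : Finset (EuclideanSpace ℝ (Fin d)))
    (hcard : P.card = N) (hsphere : ∀ p ∈ P, ‖p‖ = 1)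
    (hsym : ∀ p ∈ P, -p ∉ P)
    (u : EuclideanSpace ℝ (Fin d)) (hu : ‖u‖ = 1) :
    suppFn (kSetPoly (P ∪ P.image (fun p => -p)) N) u =
      (N : ℝ)⁻¹ * ∑ p ∈ P, |⟪p, u⟫| := by
  classical
  set S : Finset (EuclideanSpace ℝ (Fin d)) := P ∪ P.image (fun p => -p) with hSdef
  set M : ℝ := (N : ℝ)⁻¹ * ∑ p ∈ P, |⟪p, u⟫| with hMdef
  have hNpos : (0:ℝ) < N := by exact_mod_cast hN
  have hdisj : Disjoint P (P.image fun p => -p) := by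
    rw [Finset.disjoint_left]
    intro x hx hx'
    obtain ⟨p, hp, rfl⟩ := Finset.mem_image.mp hx'
    exact hsym p hp (by simpa using hx)
  -- upper bound for each N-subset
  have key : ∀ T ∈ S.powersetCard N, ⟪u, ∑ t ∈ T, t⟫ ≤ ∑ p ∈ P, |⟪p, u⟫| := by
    intro T hT
    obtain ⟨hTS, hTcard⟩ := Finset.mem_powersetCard.mp hT
    have h1 : ⟪u, ∑ t ∈ T, t⟫ = ∑ t ∈ T, ⟪u, t⟫ := inner_sum _ _ _
    have h2 : ∑ t ∈ T, ⟪u, t⟫ = ∑ t ∈ S, (if t ∈ T then ⟪u, t⟫ else 0) := by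
      rw [Finset.sum_ite_mem, Finset.inter_eq_right.mpr hTS]
    have hinjneg : ∀ a ∈ P, ∀ b ∈ P, -a = -b → a = b := by
      intro a _ b _ h; exact neg_injective h
    have h3 : ∑ t ∈ S, (if t ∈ T then ⟪u, t⟫ else 0)
        = ∑ p ∈ P, (if p ∈ T then ⟪u, p⟫ else 0)
          + ∑ p ∈ P, (if -p ∈ T then -⟪u, p⟫ else 0) := by
      rw [hSdef, Finset.sum_union hdisj, Finset.sum_image hinjneg]
      simp [inner_neg_right]
    rw [h1, h2, h3, ← Finset.sum_add_distrib]
    apply Finset.sum_le_sum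
    intro p hp
    have habs : |⟪p, u⟫| = |⟪u, p⟫| := by rw [real_inner_comm]
    rw [habs]
    by_cases h1 : p ∈ T <;> by_cases h2 : -p ∈ T <;>
      simp [h1, h2, le_abs_self, neg_le_abs, abs_nonneg]
  -- the witness subset
  set σ : EuclideanSpace ℝ (Fin d) → EuclideanSpace ℝ (Fin d) :=
    fun p => if 0 ≤ ⟪u, p⟫ then p else -p with hσdef
  have hσor : ∀ p, σ p = p ∨ σ p = -p := by
    intro p
    simp only [hσdef]
    split_ifs with h
    · exact Or.inl rfl
    · exact Or.inr rfl
  have hσmem : ∀ p ∈ P, σ p ∈ S := by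
    intro p hp
    rcases hσor p with h | h <;> rw [h]
    · exact Finset.mem_union_left _ hp
    · exact Finset.mem_union_right _ (Finset.mem_image_of_mem _ hp)
  have hinj : ∀ p ∈ P, ∀ q ∈ P, σ p = σ q → p = q := by
    intro p hp q hq h
    rcases hσor p with h1 | h1 <;> rcases hσor q with h2 | h2 <;>
      rw [h1, h2] at h
    · exact h
    · rw [h] at hp; exact absurd hp (hsym q hq)
    · rw [← h] at hq; exact absurd hq (hsym p hp)
    · exact neg_injective h
  have hTmem : P.image σ ∈ S.powersetCard N := by
    rw [Finset.mem_powersetCard]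
    constructor
    · intro x hx
      obtain ⟨p, hp, rfl⟩ := Finset.mem_image.mp hx
      exact hσmem p hp
    · rw [Finset.card_image_of_injOn hinj]; exact hcard
  have hval : ⟪u, ∑ t ∈ P.image σ, t⟫ = ∑ p ∈ P, |⟪p, u⟫| := by
    rw [Finset.sum_image hinj, inner_sum]
    refine Finset.sum_congr rfl fun p hp => ?_
    rw [show |⟪p, u⟫| = |⟪u, p⟫| from by rw [real_inner_comm]]
    simp only [hσdef]
    split_ifs with h
    · exact (abs_of_nonneg h).symm
    · rw [inner_neg_right, abs_of_neg (lt_of_not_ge h)]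
  -- support function computation
  have hconv : Convex ℝ {x : EuclideanSpace ℝ (Fin d) | ⟪u, x⟫ ≤ M} :=
    convex_halfSpace_le ⟨fun x y => inner_add_right _ _ _,
      fun c x => real_inner_smul_right _ _ _⟩ M
  have hsub : (((S.powersetCard N).image fun T => (N:ℝ)⁻¹ • ∑ t ∈ T, t :
      Finset (EuclideanSpace ℝ (Fin d))) : Set (EuclideanSpace ℝ (Fin d)))
      ⊆ {x : EuclideanSpace ℝ (Fin d) | ⟪u, x⟫ ≤ M} := by
    intro x hx
    obtain ⟨T, hT, rfl⟩ := Finset.mem_image.mp (Finset.mem_coe.mp hx)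
    show ⟪u, (N:ℝ)⁻¹ • ∑ t ∈ T, t⟫ ≤ M
    rw [real_inner_smul_right, hMdef]
    exact mul_le_mul_of_nonneg_left (key T hT) (by positivity)
  have hub : ∀ y ∈ (fun x => ⟪u, x⟫) '' kSetPoly S N, y ≤ M := by
    rintro y ⟨x, hx, rfl⟩
    exact convexHull_min hsub hconv hx
  have hvert : ((N:ℝ)⁻¹ • ∑ t ∈ P.image σ, t) ∈ kSetPoly S N := by
    apply subset_convexHull ℝ _
    exact Finset.mem_coe.mpr (Finset.mem_image_of_mem _ hTmem)
  have hmem : M ∈ (fun x => ⟪u, x⟫) '' kSetPoly S N := by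
    refine ⟨(N:ℝ)⁻¹ • ∑ t ∈ P.image σ, t, hvert, ?_⟩
    show ⟪u, (N:ℝ)⁻¹ • ∑ t ∈ P.image σ, t⟫ = M
    rw [real_inner_smul_right, hval, hMdef]
  exact IsGreatest.csSup_eq ⟨hmem, hub⟩
end

section
/- Let K be a nonempty convex subset of ℝ^d contained in the closed unit ball B(0,1), let λ, η ∈ (0,1), let δ := min(λ, η), and let U be a δ-sample of the unit sphere S^{d−1} (i.e. every point of S^{d−1} is within Euclidean distance δ of some point of U). If max_{u∈U} |h(K,u) − λ| ≤ η·λ, then the Hausdorff distance between (1/λ)·K and the closed unit ball B(0,1) is at most 5η. -/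
open Metric RealInnerProductSpace Pointwise

/-- Let `K ⊆ ℝ^d` be a nonempty convex set contained in the closed unit
ball, let `λ, η ∈ (0,1)`, `δ = min(λ, η)`, and let `U ⊆ S^{d-1}` be a `δ`-sample of the
unit sphere. If `max_{u ∈ U} |h(K, u) - λ| ≤ η λ`, then the Hausdorff distance between
`(1/λ) K` and the closed unit ball is at most `5 η`. -/
theorem hausdorffDist_le_of_suppFn_close
    {d : ℕ} (K : Set (EuclideanSpace ℝ (Fin d))) (hK : K.Nonempty)
    (hconv : Convex ℝ K) (hsub : K ⊆ Metric.closedBall 0 1)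
    (lam η : ℝ) (hlam : lam ∈ Set.Ioo (0:ℝ) 1) (hη : η ∈ Set.Ioo (0:ℝ) 1)
    (U : Set (EuclideanSpace ℝ (Fin d)))
    (hUsub : U ⊆ Metric.sphere 0 1)
    (hUsample : ∀ x ∈ Metric.sphere (0 : EuclideanSpace ℝ (Fin d)) 1,
      ∃ u ∈ U, ‖x - u‖ ≤ min lam η)
    (hclose : ∀ u ∈ U, |suppFn K u - lam| ≤ η * lam) :
    Metric.hausdorffDist (lam⁻¹ • K) (Metric.closedBall 0 1) ≤ 5 * η := by
  obtain ⟨hlam0, hlam1⟩ := hlam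
  obtain ⟨hη0, hη1⟩ := hη
  set δ := min lam η with hδdef
  have hδ0 : 0 < δ := lt_min hlam0 hη0
  have hδlam : δ ≤ lam := min_le_left _ _
  have hδη : δ ≤ η := min_le_right _ _
  have hδ1 : δ < 1 := lt_of_le_of_lt hδlam hlam1
  have hK1 : ∀ x ∈ K, ‖x‖ ≤ 1 := fun x hx => mem_closedBall_zero_iff.mp (hsub hx)
  have hUnorm : ∀ u ∈ U, ‖u‖ = 1 := fun u hu => mem_sphere_zero_iff_norm.mp (hUsub hu)
  have hbdd : ∀ u ∈ U, BddAbove ((fun x => ⟪u, x⟫) '' K) := by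
    intro u hu
    refine ⟨1, ?_⟩
    rintro y ⟨x, hx, rfl⟩
    calc ⟪u, x⟫ ≤ ‖u‖ * ‖x‖ := real_inner_le_norm u x
      _ ≤ 1 := by rw [hUnorm u hu, one_mul]; exact hK1 x hx
  have hle : ∀ u ∈ U, ∀ x ∈ K, ⟪u, x⟫ ≤ lam * (1 + η) := by
    intro u hu x hx
    have h1 : ⟪u, x⟫ ≤ suppFn K u := by
      unfold suppFn
      exact le_csSup (hbdd u hu) ⟨x, hx, rfl⟩
    have h2 := (abs_le.mp (hclose u hu)).2
    nlinarith
  have hge : ∀ u ∈ U, lam * (1 - η) ≤ suppFn K u := by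
    intro u hu
    have h2 := (abs_le.mp (hclose u hu)).1
    nlinarith
  -- Step A : pointwise norm bound from the support function upper bound
  have hA : ∀ x ∈ K, ‖x‖ ≤ lam * (1 + η) + δ * ‖x‖ := by
    intro x hx
    rcases eq_or_ne x 0 with rfl | hx0
    · simp only [norm_zero, mul_zero, add_zero]
      nlinarith
    · have hxn : 0 < ‖x‖ := norm_pos_iff.mpr hx0
      set v : EuclideanSpace ℝ (Fin d) := ‖x‖⁻¹ • x with hv
      have hvs : v ∈ Metric.sphere (0 : EuclideanSpace ℝ (Fin d)) 1 := by
        rw [mem_sphere_zero_iff_norm, hv, norm_smul, Real.norm_eq_abs,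
          abs_of_pos (inv_pos.mpr hxn), inv_mul_cancel₀ (ne_of_gt hxn)]
      obtain ⟨u, hu, huv⟩ := hUsample v hvs
      have h1 : ⟪v, x⟫ = ‖x‖ := by
        rw [hv, real_inner_smul_left, real_inner_self_eq_norm_mul_norm]
        field_simp
      have h2 : ⟪v - u, x⟫ ≤ δ * ‖x‖ := by
        calc ⟪v - u, x⟫ ≤ ‖v - u‖ * ‖x‖ := real_inner_le_norm _ _
          _ ≤ δ * ‖x‖ := by
            apply mul_le_mul_of_nonneg_right huv (le_of_lt hxn)
      have h3 : ⟪u, x⟫ ≤ lam * (1 + η) := hle u hu x hx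
      have h4 : ⟪u, x⟫ = ⟪v, x⟫ - ⟪v - u, x⟫ := by
        rw [inner_sub_left]; ring
      linarith [h1, h2, h3, h4]
  set Bnd : ℝ := min (lam * (1 + η) / (1 - δ)) 1 with hBnddef
  have hBnd0 : 0 ≤ Bnd := le_min (div_nonneg (by positivity) (by linarith)) zero_le_one
  have hKB : ∀ x ∈ K, ‖x‖ ≤ Bnd := by
    intro x hx
    refine le_min ?_ (hK1 x hx)
    rw [le_div_iff₀ (by linarith : (0:ℝ) < 1 - δ)]
    have := hA x hx
    nlinarith [norm_nonneg x]
  have hkey : δ * Bnd ≤ 4 * (η * lam) := by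
    rcases le_or_gt (1/4 : ℝ) η with h4 | h4
    · have h5 : δ * Bnd ≤ lam * 1 :=
        mul_le_mul hδlam (min_le_right _ _) hBnd0 (le_of_lt hlam0)
      nlinarith
    · have hb : Bnd ≤ lam * (1 + η) / (1 - δ) := min_le_left _ _
      have hd4 : δ < 1/4 := lt_of_le_of_lt hδη h4
      have h5 : lam * (1 + η) / (1 - δ) ≤ 4 * lam := by
        rw [div_le_iff₀ (by linarith : (0:ℝ) < 1 - δ)]
        nlinarith
      calc δ * Bnd ≤ η * (4 * lam) :=
            mul_le_mul hδη (hb.trans h5) hBnd0 (le_of_lt hη0)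
        _ = 4 * (η * lam) := by ring
  -- norm bound for points of K
  have hxnorm : ∀ x ∈ K, ‖x‖ ≤ lam * (1 + 5 * η) := by
    intro x hx
    have h1 := hA x hx
    have h2 : δ * ‖x‖ ≤ δ * Bnd := mul_le_mul_of_nonneg_left (hKB x hx) hδ0.le
    nlinarith
  -- Direction 1
  have H1 : ∀ y ∈ lam⁻¹ • K, infDist y (Metric.closedBall (0 : EuclideanSpace ℝ (Fin d)) 1) ≤ 5 * η := by
    rintro y ⟨x, hx, rfl⟩
    have hyb : ‖lam⁻¹ • x‖ ≤ 1 + 5 * η := by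
      rw [norm_smul, Real.norm_eq_abs, abs_of_pos (inv_pos.mpr hlam0),
        inv_mul_le_iff₀ hlam0]
      nlinarith [hxnorm x hx]
    set y := lam⁻¹ • x with hy
    rcases le_or_gt ‖y‖ 1 with h1 | h1
    · rw [infDist_zero_of_mem (mem_closedBall_zero_iff.mpr h1)]
      positivity
    · have hyn : 0 < ‖y‖ := by linarith
      have hq : ‖y‖⁻¹ • y ∈ Metric.closedBall (0 : EuclideanSpace ℝ (Fin d)) 1 := by
        rw [mem_closedBall_zero_iff, norm_smul, Real.norm_eq_abs,
          abs_of_pos (inv_pos.mpr hyn), inv_mul_cancel₀ (ne_of_gt hyn)]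
      refine (infDist_le_dist_of_mem hq).trans ?_
      rw [dist_eq_norm]
      have he : y - ‖y‖⁻¹ • y = (1 - ‖y‖⁻¹) • y := by
        rw [sub_smul, one_smul]
      rw [he, norm_smul, Real.norm_eq_abs,
        abs_of_nonneg (by rw [sub_nonneg]; exact inv_le_one_of_one_le₀ h1.le)]
      have : (1 - ‖y‖⁻¹) * ‖y‖ = ‖y‖ - 1 := by
        field_simp
      rw [this]
      linarith
  -- Direction 2
  have H2 : ∀ z ∈ Metric.closedBall (0 : EuclideanSpace ℝ (Fin d)) 1, infDist z (lam⁻¹ • K) ≤ 5 * η := by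
    intro z hz
    have hz1 : ‖z‖ ≤ 1 := mem_closedBall_zero_iff.mp hz
    have hCne : (closure K).Nonempty := hK.closure
    have hCc : IsComplete (closure K) := isClosed_closure.isComplete
    have hCconv : Convex ℝ (closure K) := hconv.closure
    obtain ⟨p, hp, hmin⟩ :=
      exists_norm_eq_iInf_of_complete_convex hCne hCc hCconv (lam • z)
    have hproj := (norm_eq_iInf_iff_real_inner_le_zero hCconv hp).mp hmin
    have hdist : ‖lam • z - p‖ ≤ 5 * (η * lam) := by
      rcases eq_or_ne (lam • z - p) 0 with h0 | h0
      · rw [h0, norm_zero]; positivity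
      · set w : EuclideanSpace ℝ (Fin d) := lam • z - p with hw
        have hwn : 0 < ‖w‖ := norm_pos_iff.mpr h0
        set v : EuclideanSpace ℝ (Fin d) := ‖w‖⁻¹ • w with hv
        have hvs : v ∈ Metric.sphere (0 : EuclideanSpace ℝ (Fin d)) 1 := by
          rw [mem_sphere_zero_iff_norm, hv, norm_smul, Real.norm_eq_abs,
            abs_of_pos (inv_pos.mpr hwn), inv_mul_cancel₀ (ne_of_gt hwn)]
        have hvnorm : ‖v‖ = 1 := mem_sphere_zero_iff_norm.mp hvs
        obtain ⟨u, hu, huv⟩ := hUsample v hvs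
        have hup : suppFn K u ≤ ⟪v, p⟫ + δ * Bnd := by
          unfold suppFn
          apply csSup_le (hK.image _)
          rintro r ⟨x, hx, rfl⟩
          have e1 : ⟪u - v, x⟫ ≤ δ * Bnd := by
            calc ⟪u - v, x⟫ ≤ ‖u - v‖ * ‖x‖ := real_inner_le_norm _ _
              _ ≤ δ * Bnd := by
                apply mul_le_mul ?_ (hKB x hx) (norm_nonneg x) hδ0.le
                rw [← norm_neg, neg_sub]; exact huv
          have e3 : ⟪v, x⟫ ≤ ⟪v, p⟫ := by
            have h5 := hproj x (subset_closure hx)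
            have h6 : ⟪v, x - p⟫ ≤ 0 := by
              rw [hv, real_inner_smul_left]
              exact mul_nonpos_of_nonneg_of_nonpos (inv_pos.mpr hwn).le h5
            rw [inner_sub_right] at h6
            linarith
          have e4 : ⟪u, x⟫ = ⟪v, x⟫ + ⟪u - v, x⟫ := by
            rw [inner_sub_left]; ring
          simp only [e4]
          linarith
        have hlow := hge u hu
        have hvp : lam * (1 - η) - δ * Bnd ≤ ⟪v, p⟫ := by linarith
        have hnw : ‖w‖ = ⟪v, lam • z⟫ - ⟪v, p⟫ := by
          have h7 : ⟪v, w⟫ = ‖w‖ := by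
            rw [hv, real_inner_smul_left, real_inner_self_eq_norm_mul_norm]
            field_simp
          rw [hw, inner_sub_right] at h7
          linarith
        have hvz : ⟪v, lam • z⟫ ≤ lam := by
          calc ⟪v, lam • z⟫ ≤ ‖v‖ * ‖lam • z‖ := real_inner_le_norm _ _
            _ ≤ lam := by
              rw [hvnorm, one_mul, norm_smul, Real.norm_eq_abs, abs_of_pos hlam0]
              nlinarith
        rw [hnw]
        nlinarith
    have hp' : lam⁻¹ • p ∈ closure (lam⁻¹ • K) :=
      smul_closure_subset lam⁻¹ K (Set.smul_mem_smul_set hp)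
    rw [← infDist_closure]
    refine (infDist_le_dist_of_mem hp').trans ?_
    rw [dist_eq_norm]
    have he : z - lam⁻¹ • p = lam⁻¹ • (lam • z - p) := by
      rw [smul_sub, smul_smul, inv_mul_cancel₀ (ne_of_gt hlam0), one_smul]
    rw [he, norm_smul, Real.norm_eq_abs, abs_of_pos (inv_pos.mpr hlam0),
      inv_mul_le_iff₀ hlam0]
    nlinarith [hdist]
  exact Metric.hausdorffDist_le_of_infDist (by positivity) H1 H2
end
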